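/- arXiv:1711.02543 — 8 statements merged into one kernel-verified Lean document; each statement's English description precedes it below -/
import Mathlib

section
/- Let T_μ^{(n)} : C → E (n ∈ ℕ) be the mappings determined by ⟨T_μ^{(n)}x, x*⟩ = μ_t⟨T_t^n x, x*⟩ for all x ∈ C and x* ∈ E* (these exist and are unique since the weak closure of each orbit is weakly compact). If the representation 𝒮 is uniformly asymptotically nonexpansive, i.e. limsup_{n→∞} sup_{t∈S} ‖T_t^n x − T_t^n y‖ ≤ ‖x − y‖ for all x, y ∈ C, then limsup_{n→∞} ‖T_μ^{(n)}x − T_μ^{(n)}y‖ ≤ ‖x − y‖ for all x, y ∈ C. -/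
open Filter Topology
open scoped ENNReal

/-- If the representation `𝒮 = {T_s : s ∈ S}` is uniformly asymptotically nonexpansive,
then the mappings `T_μ^{(n)}` determined by `⟨T_μ^{(n)}x, x*⟩ = μ_t⟨T_t^n x, x*⟩` satisfy
`limsup_n ‖T_μ^{(n)}x − T_μ^{(n)}y‖ ≤ ‖x − y‖` for all `x, y ∈ C`. -/
theorem tmu_asymptotically_nonexpansive
    {S E : Type*} [Semigroup S]
    [NormedAddCommGroup E] [NormedSpace ℝ E] [CompleteSpace E]
    -- E is reflexive
    (hrefl : Function.Surjective (NormedSpace.inclusionInDoubleDual ℝ E))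
    -- C nonempty closed convex
    (C : Set E) (hCne : C.Nonempty) (hCcl : IsClosed C) (hCcv : Convex ℝ C)
    -- the representation
    (T : S → E → E)
    (hTC : ∀ s : S, ∀ x ∈ C, T s x ∈ C)
    (hrep : ∀ s t : S, ∀ x ∈ C, T (s * t) x = T s (T t x))
    -- weak closure of each orbit is weakly compact
    (hwcpt : ∀ x ∈ C, IsCompact (closure (Set.range (fun t => T t x) : Set (WeakSpace ℝ E))))
    -- X a subspace of ℓ^∞(S) containing all functions t ↦ ⟨T_t^n x, x*⟩
    (X : Submodule ℝ (lp (fun _ : S => ℝ) ∞))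
    (hX : ∀ x ∈ C, ∀ (n : ℕ) (φ : E →L[ℝ] ℝ),
      ∃ g : lp (fun _ : S => ℝ) ∞, g ∈ X ∧ ∀ t : S, g t = φ ((T t)^[n] x))
    -- μ a mean on X : ‖μ‖ = μ(1) = 1 (X contains the constant function 1)
    (μ : X →L[ℝ] ℝ)
    (hμnorm : ‖μ‖ = 1)
    (hμone : ∃ g : lp (fun _ : S => ℝ) ∞, ∃ hg : g ∈ X,
      (∀ t : S, g t = 1) ∧ μ ⟨g, hg⟩ = 1)
    -- the mappings T_μ^{(n)} determined by ⟨T_μ^{(n)}x, x*⟩ = μ_t⟨T_t^n x, x*⟩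
    (Tμ : ℕ → E → E)
    (hTμ : ∀ (n : ℕ), ∀ x ∈ C, ∀ (φ : E →L[ℝ] ℝ)
        (g : lp (fun _ : S => ℝ) ∞) (hg : g ∈ X),
      (∀ t : S, g t = φ ((T t)^[n] x)) → μ ⟨g, hg⟩ = φ (Tμ n x))
    -- 𝒮 is uniformly asymptotically nonexpansive
    (huan : ∀ x ∈ C, ∀ y ∈ C,
      Filter.limsup (fun n : ℕ => ⨆ t : S, (‖(T t)^[n] x - (T t)^[n] y‖₊ : ℝ≥0∞)) atTop
        ≤ (‖x - y‖₊ : ℝ≥0∞)) :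
    ∀ x ∈ C, ∀ y ∈ C,
      Filter.limsup (fun n : ℕ => (‖Tμ n x - Tμ n y‖₊ : ℝ≥0∞)) atTop
        ≤ (‖x - y‖₊ : ℝ≥0∞) := by
  intro x hx y hy
  -- key pointwise bound
  have key : ∀ n : ℕ, (‖Tμ n x - Tμ n y‖₊ : ℝ≥0∞)
      ≤ ⨆ t : S, (‖(T t)^[n] x - (T t)^[n] y‖₊ : ℝ≥0∞) := by
    intro n
    set M : ℝ≥0∞ := ⨆ t : S, (‖(T t)^[n] x - (T t)^[n] y‖₊ : ℝ≥0∞) with hM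
    rcases eq_or_ne M ⊤ with hMt | hMt
    · simp [hMt]
    set m : ℝ := M.toReal with hm
    have hm0 : 0 ≤ m := ENNReal.toReal_nonneg
    have hbound : ∀ t : S, ‖(T t)^[n] x - (T t)^[n] y‖ ≤ m := by
      intro t
      have h1 : (‖(T t)^[n] x - (T t)^[n] y‖₊ : ℝ≥0∞) ≤ M := by rw [hM]; exact le_iSup (fun t : S => (‖(T t)^[n] x - (T t)^[n] y‖₊ : ℝ≥0∞)) t
      have := ENNReal.toReal_mono hMt h1
      simpa using this
    have hnorm : ‖Tμ n x - Tμ n y‖ ≤ m := by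
      apply NormedSpace.norm_le_dual_bound ℝ _ hm0
      intro φ
      obtain ⟨g, hg, hgt⟩ := hX x hx n φ
      obtain ⟨h, hh, hht⟩ := hX y hy n φ
      have hgx : μ ⟨g, hg⟩ = φ (Tμ n x) := hTμ n x hx φ g hg hgt
      have hhy : μ ⟨h, hh⟩ = φ (Tμ n y) := hTμ n y hy φ h hh hht
      have hφ : φ (Tμ n x - Tμ n y) = μ (⟨g, hg⟩ - ⟨h, hh⟩) := by
        rw [map_sub, map_sub, hgx, hhy]
      rw [hφ]
      calc ‖μ (⟨g, hg⟩ - ⟨h, hh⟩)‖ ≤ ‖μ‖ * ‖(⟨g, hg⟩ - ⟨h, hh⟩ : X)‖ :=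
            μ.le_opNorm _
        _ = ‖g - h‖ := by rw [hμnorm, one_mul]; rfl
        _ ≤ m * ‖φ‖ := by
            apply lp.norm_le_of_forall_le (mul_nonneg hm0 (norm_nonneg φ))
            intro t
            have : (g - h) t = φ ((T t)^[n] x - (T t)^[n] y) := by
              have : (g - h) t = g t - h t := by
                simp [lp.coeFn_sub g h]
              rw [this, hgt t, hht t, map_sub]
            rw [this]
            calc ‖φ ((T t)^[n] x - (T t)^[n] y)‖
                ≤ ‖φ‖ * ‖(T t)^[n] x - (T t)^[n] y‖ := φ.le_opNorm _
              _ ≤ ‖φ‖ * m := by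
                  exact mul_le_mul_of_nonneg_left (hbound t) (norm_nonneg φ)
              _ = m * ‖φ‖ := mul_comm _ _
    -- convert back to ℝ≥0∞
    rw [← ENNReal.coe_toNNReal hMt]
    exact_mod_cast (by simpa [hm, ENNReal.coe_toNNReal hMt, ENNReal.coe_toNNReal_eq_toReal] using hnorm :
      ‖Tμ n x - Tμ n y‖ ≤ (M.toNNReal : ℝ))
  calc Filter.limsup (fun n : ℕ => (‖Tμ n x - Tμ n y‖₊ : ℝ≥0∞)) atTop
      ≤ Filter.limsup (fun n : ℕ =>
          ⨆ t : S, (‖(T t)^[n] x - (T t)^[n] y‖₊ : ℝ≥0∞)) atTop :=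
        Filter.limsup_le_limsup (Filter.Eventually.of_forall key)
    _ ≤ (‖x - y‖₊ : ℝ≥0∞) := huan x hx y hy
end

section
/- For every x ∈ C, the element T_μ x belongs to the closure of the convex hull of {T_t x : t ∈ S}; in particular T_μ maps C into C. -/
open Filter Topology
open scoped ENNReal

set_option maxHeartbeats 1000000
set_option synthInstance.maxHeartbeats 400000

/-- For every `x ∈ C`, `T_μ x` belongs to the closure of the convex hull of
`{T_t x : t ∈ S}`; in particular `T_μ` maps `C` into `C`. -/
theorem tmu_mem_closure_convexHull
    {S E : Type*} [Semigroup S]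
    [NormedAddCommGroup E] [NormedSpace ℝ E] [CompleteSpace E]
    -- E is reflexive
    (hrefl : Function.Surjective (NormedSpace.inclusionInDoubleDual ℝ E))
    -- C nonempty closed convex
    (C : Set E) (hCne : C.Nonempty) (hCcl : IsClosed C) (hCcv : Convex ℝ C)
    -- the representation
    (T : S → E → E)
    (hTC : ∀ s : S, ∀ x ∈ C, T s x ∈ C)
    (hrep : ∀ s t : S, ∀ x ∈ C, T (s * t) x = T s (T t x))
    -- weak closure of each orbit is weakly compact
    (hwcpt : ∀ x ∈ C, IsCompact (closure (Set.range (fun t => T t x) : Set (WeakSpace ℝ E))))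
    -- X a subspace of ℓ^∞(S) containing all functions t ↦ ⟨T_t x, x*⟩
    (X : Submodule ℝ (lp (fun _ : S => ℝ) ∞))
    (hX : ∀ x ∈ C, ∀ φ : E →L[ℝ] ℝ,
      ∃ g : lp (fun _ : S => ℝ) ∞, g ∈ X ∧ ∀ t : S, g t = φ (T t x))
    -- μ a mean on X : ‖μ‖ = μ(1) = 1 (X contains the constant function 1)
    (μ : X →L[ℝ] ℝ)
    (hμnorm : ‖μ‖ = 1)
    (hμone : ∃ g : lp (fun _ : S => ℝ) ∞, ∃ hg : g ∈ X,
      (∀ t : S, g t = 1) ∧ μ ⟨g, hg⟩ = 1)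
    -- the mapping T_μ determined by ⟨T_μ x, x*⟩ = μ_t⟨T_t x, x*⟩
    (Tμ : E → E)
    (hTμ : ∀ x ∈ C, ∀ (φ : E →L[ℝ] ℝ) (g : lp (fun _ : S => ℝ) ∞) (hg : g ∈ X),
      (∀ t : S, g t = φ (T t x)) → μ ⟨g, hg⟩ = φ (Tμ x))
    :
    ∀ x ∈ C, Tμ x ∈ closure (convexHull ℝ (Set.range fun t => T t x)) ∧ Tμ x ∈ C := by
  classical
  -- dispose of the case where S is empty
  cases isEmpty_or_nonempty S with
  | inl hS =>
    exfalso
    obtain ⟨g, hg, hgt, hμg⟩ := hμone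
    have hsub : Subsingleton (lp (fun _ : S => ℝ) ∞) :=
      ⟨fun a b => lp.ext (Subsingleton.elim _ _)⟩
    have : (⟨g, hg⟩ : X) = 0 := Subtype.ext (by
      have := @Subsingleton.elim _ hsub g 0
      simpa using this)
    rw [this] at hμg
    simp at hμg
  | inr hS =>
    intro x hx
    have hsubC : closure (convexHull ℝ (Set.range fun t => T t x)) ⊆ C := by
      apply closure_minimal _ hCcl
      apply convexHull_min _ hCcv
      rintro _ ⟨t, rfl⟩
      exact hTC t x hx
    have hmain : Tμ x ∈ closure (convexHull ℝ (Set.range fun t => T t x)) := by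
      by_contra hnot
      obtain ⟨φ, u, hlt, hgt⟩ :=
        geometric_hahn_banach_closed_point
          ((convex_convexHull ℝ _).closure) isClosed_closure hnot
      obtain ⟨g, hg, hgeq⟩ := hX x hx φ
      have hμg : μ ⟨g, hg⟩ = φ (Tμ x) := hTμ x hx φ g hg hgeq
      obtain ⟨one, hone, honet, hμone'⟩ := hμone
      -- all values of g are < u
      have hval : ∀ t : S, g t ≤ u := by
        intro t
        have : T t x ∈ closure (convexHull ℝ (Set.range fun t => T t x)) :=
          subset_closure (subset_convexHull ℝ _ ⟨t, rfl⟩)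
        have := hlt _ this
        rw [hgeq t]
        exact this.le
      set B : ℝ := ‖g‖ with hB
      have hBbd : ∀ t : S, |g t| ≤ B := by
        intro t
        simpa [Real.norm_eq_abs] using
          lp.norm_apply_le_norm (ENNReal.top_ne_zero) g t
      obtain ⟨t0⟩ := hS
      have huB : -B ≤ u := le_trans (neg_le_of_abs_le (hBbd t0)) (hval t0)
      set c : ℝ := (u - B) / 2 with hc
      -- the element g - c • one in X
      have hwX : g - c • one ∈ X := X.sub_mem hg (X.smul_mem c hone)
      set z : X := ⟨g - c • one, hwX⟩ with hz
      have hwnorm : ‖(g - c • one : lp (fun _ : S => ℝ) ∞)‖ ≤ (u + B) / 2 := by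
        apply lp.norm_le_of_forall_le (by linarith)
        intro t
        have h1 : (g - c • one : lp (fun _ : S => ℝ) ∞) t = g t - c := by
          have h2 : (g - c • one : lp (fun _ : S => ℝ) ∞) t = g t - c * one t := by
            simp [lp.coeFn_sub, lp.coeFn_smul, smul_eq_mul]
            rfl
          rw [h2, honet t, mul_one]
        rw [h1, Real.norm_eq_abs, abs_le]
        have h2 := hval t
        have h3 := neg_le_of_abs_le (hBbd t)
        constructor <;> [linarith; linarith]
      have hznorm : ‖z‖ ≤ (u + B) / 2 := hwnorm
      have hμz : μ z ≤ (u + B) / 2 := by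
        calc μ z ≤ |μ z| := le_abs_self _
          _ = ‖μ z‖ := (Real.norm_eq_abs _).symm
          _ ≤ ‖μ‖ * ‖z‖ := μ.le_opNorm z
          _ = ‖z‖ := by rw [hμnorm, one_mul]
          _ ≤ (u + B) / 2 := hznorm
      have hzeq : z = (⟨g, hg⟩ : X) - c • (⟨one, hone⟩ : X) := by
        apply Subtype.ext
        rfl
      have hμzval : μ z = μ ⟨g, hg⟩ - c := by
        rw [hzeq, map_sub, map_smul, hμone']
        simp
      have : μ ⟨g, hg⟩ ≤ u := by
        rw [hμzval] at hμz; linarith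
      rw [hμg] at this
      linarith
    exact ⟨hmain, hsubC hmain⟩
end

section
/- Let a ∈ C be a uniformly asymptotically attractive point of 𝒮, i.e. limsup_{n→∞} sup_{t∈S} ‖a − T_t^n x‖ ≤ ‖a − x‖ for every x ∈ C. Let T_μ^{(n)} : C → E (n ∈ ℕ) be the mappings determined by ⟨T_μ^{(n)}x, x*⟩ = μ_t⟨a − (a − T_t^n x), x*⟩ = μ_t⟨T_t^n x, x*⟩ for all x* ∈ E*. Then limsup_{n→∞} ‖a − T_μ^{(n)}x‖ ≤ ‖a − x‖ for every x ∈ C. -/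
open Filter Topology
open scoped ENNReal

/-- If `a ∈ C` is a uniformly asymptotically attractive point of `𝒮`, i.e.
`limsup_n sup_t ‖a − T_t^n x‖ ≤ ‖a − x‖` for every `x ∈ C`, then the mappings `T_μ^{(n)}`
determined by `⟨T_μ^{(n)}x, x*⟩ = μ_t⟨T_t^n x, x*⟩` satisfy
`limsup_n ‖a − T_μ^{(n)}x‖ ≤ ‖a − x‖` for every `x ∈ C`. -/
theorem tmu_asymptotically_attractive_point
    {S E : Type*} [Semigroup S]
    [NormedAddCommGroup E] [NormedSpace ℝ E] [CompleteSpace E]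
    -- E is reflexive
    (hrefl : Function.Surjective (NormedSpace.inclusionInDoubleDual ℝ E))
    -- C nonempty closed convex
    (C : Set E) (hCne : C.Nonempty) (hCcl : IsClosed C) (hCcv : Convex ℝ C)
    -- the representation
    (T : S → E → E)
    (hTC : ∀ s : S, ∀ x ∈ C, T s x ∈ C)
    (hrep : ∀ s t : S, ∀ x ∈ C, T (s * t) x = T s (T t x))
    -- weak closure of each orbit is weakly compact
    (hwcpt : ∀ x ∈ C, IsCompact (closure (Set.range (fun t => T t x) : Set (WeakSpace ℝ E))))
    -- X a subspace of ℓ^∞(S) containing all functions t ↦ ⟨T_t^n x, x*⟩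
    (X : Submodule ℝ (lp (fun _ : S => ℝ) ∞))
    (hX : ∀ x ∈ C, ∀ (n : ℕ) (φ : E →L[ℝ] ℝ),
      ∃ g : lp (fun _ : S => ℝ) ∞, g ∈ X ∧ ∀ t : S, g t = φ ((T t)^[n] x))
    -- μ a mean on X : ‖μ‖ = μ(1) = 1 (X contains the constant function 1)
    (μ : X →L[ℝ] ℝ)
    (hμnorm : ‖μ‖ = 1)
    (hμone : ∃ g : lp (fun _ : S => ℝ) ∞, ∃ hg : g ∈ X,
      (∀ t : S, g t = 1) ∧ μ ⟨g, hg⟩ = 1)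
    -- the mappings T_μ^{(n)} determined by ⟨T_μ^{(n)}x, x*⟩ = μ_t⟨T_t^n x, x*⟩
    (Tμ : ℕ → E → E)
    (hTμ : ∀ (n : ℕ), ∀ x ∈ C, ∀ (φ : E →L[ℝ] ℝ)
        (g : lp (fun _ : S => ℝ) ∞) (hg : g ∈ X),
      (∀ t : S, g t = φ ((T t)^[n] x)) → μ ⟨g, hg⟩ = φ (Tμ n x))
    -- a is a uniformly asymptotically attractive point of 𝒮
    (a : E) (haC : a ∈ C)
    (huaa : ∀ x ∈ C,
      Filter.limsup (fun n : ℕ => ⨆ t : S, (‖a - (T t)^[n] x‖₊ : ℝ≥0∞)) atTop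
        ≤ (‖a - x‖₊ : ℝ≥0∞)) :
    ∀ x ∈ C,
      Filter.limsup (fun n : ℕ => (‖a - Tμ n x‖₊ : ℝ≥0∞)) atTop ≤ (‖a - x‖₊ : ℝ≥0∞) := by
  intro x hx
  have key : ∀ n : ℕ, (‖a - Tμ n x‖₊ : ℝ≥0∞) ≤ ⨆ t : S, (‖a - (T t)^[n] x‖₊ : ℝ≥0∞) := by
    intro n
    by_cases htop : (⨆ t : S, (‖a - (T t)^[n] x‖₊ : ℝ≥0∞)) = ⊤
    · rw [htop]; exact le_top
    set M : ℝ := (⨆ t : S, (‖a - (T t)^[n] x‖₊ : ℝ≥0∞)).toReal with hM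
    have hM0 : 0 ≤ M := ENNReal.toReal_nonneg
    have hMt : ∀ t : S, ‖a - (T t)^[n] x‖ ≤ M := by
      intro t
      have h1 : (‖a - (T t)^[n] x‖₊ : ℝ≥0∞) ≤ ⨆ t : S, (‖a - (T t)^[n] x‖₊ : ℝ≥0∞) :=
        le_iSup (fun t : S => (‖a - (T t)^[n] x‖₊ : ℝ≥0∞)) t
      have := ENNReal.toReal_mono htop h1
      simpa [hM] using this
    have hnorm : ‖a - Tμ n x‖ ≤ M := by
      apply NormedSpace.norm_le_dual_bound ℝ _ hM0
      intro φ
      obtain ⟨g, hg, hgt⟩ := hX x hx n φ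
      have hμg : μ ⟨g, hg⟩ = φ (Tμ n x) := hTμ n x hx φ g hg hgt
      obtain ⟨g1, hg1, hg1t, hμg1⟩ := hμone
      set h : lp (fun _ : S => ℝ) ∞ := φ a • g1 - g with hh
      have hhX : h ∈ X := X.sub_mem (X.smul_mem _ hg1) hg
      have hμh : μ ⟨h, hhX⟩ = φ (a - Tμ n x) := by
        have : (⟨h, hhX⟩ : X) = φ a • (⟨g1, hg1⟩ : X) - ⟨g, hg⟩ := rfl
        rw [this, map_sub, map_smul, hμg1, hμg, map_sub]
        simp [smul_eq_mul]
      have hhnorm : ‖(⟨h, hhX⟩ : X)‖ ≤ M * ‖φ‖ := by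
        have : ‖h‖ ≤ M * ‖φ‖ := by
          apply lp.norm_le_of_forall_le (mul_nonneg hM0 (norm_nonneg φ))
          intro t
          have hht : h t = φ a - φ ((T t)^[n] x) := by
            simp [hh, hg1t t, hgt t]
            change φ a • g1 t - g t = _
            rw [hg1t t, hgt t, smul_eq_mul, mul_one]
          rw [hht, ← map_sub]
          calc ‖φ (a - (T t)^[n] x)‖ ≤ ‖φ‖ * ‖a - (T t)^[n] x‖ := φ.le_opNorm _
            _ ≤ ‖φ‖ * M := by
                exact mul_le_mul_of_nonneg_left (hMt t) (norm_nonneg φ)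
            _ = M * ‖φ‖ := mul_comm _ _
        exact this
      calc ‖φ (a - Tμ n x)‖ = ‖μ ⟨h, hhX⟩‖ := by rw [hμh]
        _ ≤ ‖μ‖ * ‖(⟨h, hhX⟩ : X)‖ := μ.le_opNorm _
        _ ≤ 1 * (M * ‖φ‖) := by
            rw [hμnorm]; exact mul_le_mul_of_nonneg_left hhnorm (by norm_num)
        _ = M * ‖φ‖ := one_mul _
    calc (‖a - Tμ n x‖₊ : ℝ≥0∞) = ENNReal.ofReal ‖a - Tμ n x‖ := (ofReal_norm_eq_enorm _).symm
      _ ≤ ENNReal.ofReal M := ENNReal.ofReal_le_ofReal hnorm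
      _ = ⨆ t : S, (‖a - (T t)^[n] x‖₊ : ℝ≥0∞) := by
          rw [hM, ENNReal.ofReal_toReal htop]
  calc Filter.limsup (fun n : ℕ => (‖a - Tμ n x‖₊ : ℝ≥0∞)) atTop
      ≤ Filter.limsup (fun n : ℕ => ⨆ t : S, (‖a - (T t)^[n] x‖₊ : ℝ≥0∞)) atTop :=
        Filter.limsup_le_limsup (Filter.Eventually.of_forall key)
    _ ≤ (‖a - x‖₊ : ℝ≥0∞) := huaa x hx
end

section
/- If every mapping T_t (t ∈ S) is quasi-nonexpansive, i.e. ‖T_t x − f‖ ≤ ‖x − f‖ for every x ∈ C and every fixed point f of T_t, then T_μ is Fix(𝒮)-quasi-nonexpansive: ‖T_μ x − f‖ ≤ ‖x − f‖ for every x ∈ C and every f ∈ Fix(𝒮) = ∩_{s∈S}{x ∈ C : T_s x = x}. -/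
open Filter Topology
open scoped ENNReal

/-- If every `T_t` is quasi-nonexpansive, then `T_μ` is `Fix(𝒮)`-quasi-nonexpansive. -/
theorem tmu_fix_quasi_nonexpansive
    {S E : Type*} [Semigroup S]
    [NormedAddCommGroup E] [NormedSpace ℝ E] [CompleteSpace E]
    -- E is reflexive
    (hrefl : Function.Surjective (NormedSpace.inclusionInDoubleDual ℝ E))
    -- C nonempty closed convex
    (C : Set E) (hCne : C.Nonempty) (hCcl : IsClosed C) (hCcv : Convex ℝ C)
    -- the representation
    (T : S → E → E)
    (hTC : ∀ s : S, ∀ x ∈ C, T s x ∈ C)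
    (hrep : ∀ s t : S, ∀ x ∈ C, T (s * t) x = T s (T t x))
    -- weak closure of each orbit is weakly compact
    (hwcpt : ∀ x ∈ C, IsCompact (closure (Set.range (fun t => T t x) : Set (WeakSpace ℝ E))))
    -- X a subspace of ℓ^∞(S) containing all functions t ↦ ⟨T_t x, x*⟩
    (X : Submodule ℝ (lp (fun _ : S => ℝ) ∞))
    (hX : ∀ x ∈ C, ∀ φ : E →L[ℝ] ℝ,
      ∃ g : lp (fun _ : S => ℝ) ∞, g ∈ X ∧ ∀ t : S, g t = φ (T t x))
    -- μ a mean on X : ‖μ‖ = μ(1) = 1 (X contains the constant function 1)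
    (μ : X →L[ℝ] ℝ)
    (hμnorm : ‖μ‖ = 1)
    (hμone : ∃ g : lp (fun _ : S => ℝ) ∞, ∃ hg : g ∈ X,
      (∀ t : S, g t = 1) ∧ μ ⟨g, hg⟩ = 1)
    -- the mapping T_μ determined by ⟨T_μ x, x*⟩ = μ_t⟨T_t x, x*⟩
    (Tμ : E → E)
    (hTμ : ∀ x ∈ C, ∀ (φ : E →L[ℝ] ℝ) (g : lp (fun _ : S => ℝ) ∞) (hg : g ∈ X),
      (∀ t : S, g t = φ (T t x)) → μ ⟨g, hg⟩ = φ (Tμ x))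
    -- every T_t is quasi-nonexpansive
    (hqne : ∀ t : S, ∀ x ∈ C, ∀ f ∈ C, T t f = f → ‖T t x - f‖ ≤ ‖x - f‖) :
    ∀ x ∈ C, ∀ f ∈ C, (∀ s : S, T s f = f) → ‖Tμ x - f‖ ≤ ‖x - f‖ := by
  intro x hx f hf hfix
  rcases eq_or_ne (Tμ x) f with h0 | h0
  · simp [h0, norm_nonneg]
  rcases exists_dual_vector ℝ (Tμ x - f) (norm_ne_zero_iff.mpr (sub_ne_zero.mpr h0)) with ⟨φ, hφ1, hφ2⟩
  rcases hX x hx φ with ⟨g, hg, hgt⟩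
  rcases hμone with ⟨e, he, het, hμe⟩
  set h : lp (fun _ : S => ℝ) ∞ := g - φ f • e with hh
  have hhX : h ∈ X := X.sub_mem hg (X.smul_mem _ he)
  have hht : ∀ t : S, h t = φ (T t x) - φ f := by
    intro t
    simp [hh, hgt t, het t]
    show (g : S → ℝ) t - φ f • (e : S → ℝ) t = _
    rw [hgt t, het t, smul_eq_mul, mul_one]
  have hnorm : ‖h‖ ≤ ‖x - f‖ := by
    apply lp.norm_le_of_forall_le (norm_nonneg _)
    intro t
    rw [hht t]
    calc ‖φ (T t x) - φ f‖ = ‖φ (T t x - f)‖ := by rw [map_sub]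
      _ ≤ ‖φ‖ * ‖T t x - f‖ := φ.le_opNorm _
      _ ≤ ‖T t x - f‖ := by rw [hφ1]; simp
      _ ≤ ‖x - f‖ := hqne t x hx f hf (hfix t)
  have hμh : μ ⟨h, hhX⟩ = φ (Tμ x) - φ f := by
    have : (⟨h, hhX⟩ : X) = ⟨g, hg⟩ - φ f • ⟨e, he⟩ := rfl
    rw [this, map_sub, map_smul, hTμ x hx φ g hg hgt, hμe]
    simp
  have : ‖Tμ x - f‖ = μ ⟨h, hhX⟩ := by
    rw [hμh, ← map_sub, hφ2]; norm_num
  rw [this]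
  calc μ ⟨h, hhX⟩ ≤ |μ ⟨h, hhX⟩| := le_abs_self _
    _ = ‖μ ⟨h, hhX⟩‖ := rfl
    _ ≤ ‖μ‖ * ‖(⟨h, hhX⟩ : X)‖ := μ.le_opNorm _
    _ ≤ ‖h‖ := by rw [hμnorm, one_mul]; exact le_of_eq rfl
    _ ≤ ‖x - f‖ := hnorm
end

section
/- Suppose E = H is a real Hilbert space and every mapping T_s (s ∈ S) is monotone on C, i.e. ⟨T_s x − T_s y, x − y⟩ ≥ 0 for all x, y ∈ C. Then T_μ is monotone: ⟨T_μ x − T_μ y, x − y⟩ ≥ 0 for all x, y ∈ C. -/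
open Filter Topology
open scoped ENNReal RealInnerProductSpace

/-- A mean is positive. -/
lemma mean_pos {S : Type*}
    (X : Submodule ℝ (lp (fun _ : S => ℝ) ∞))
    (μ : X →L[ℝ] ℝ)
    (hμnorm : ‖μ‖ = 1)
    (hμone : ∃ g : lp (fun _ : S => ℝ) ∞, ∃ hg : g ∈ X,
      (∀ t : S, g t = 1) ∧ μ ⟨g, hg⟩ = 1)
    (f : lp (fun _ : S => ℝ) ∞) (hf : f ∈ X) (hfpos : ∀ t, 0 ≤ f t) :
    0 ≤ μ ⟨f, hf⟩ := by
  obtain ⟨e, he, heone, hμe⟩ := hμone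
  set M : ℝ := ‖f‖ with hM
  have hM0 : 0 ≤ M := norm_nonneg f
  set h : lp (fun _ : S => ℝ) ∞ := M • e - f with hh
  have hhX : h ∈ X := X.sub_mem (X.smul_mem M he) hf
  have hbound : ∀ t : S, ‖h t‖ ≤ M := by
    intro t
    have h1 : h t = M - f t := by
      rw [hh]; show M * e t - f t = M - f t; rw [heone t, mul_one]
    have h2 : f t ≤ M := by
      have := lp.norm_apply_le_norm ENNReal.top_ne_zero f t
      exact (le_abs_self _).trans this
    rw [h1, Real.norm_eq_abs, abs_le]
    constructor <;> [linarith [hfpos t]; linarith [hfpos t]]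
  have hnh : ‖h‖ ≤ M := lp.norm_le_of_forall_le hM0 hbound
  have hμh : μ ⟨h, hhX⟩ ≤ M := by
    calc μ ⟨h, hhX⟩ ≤ ‖μ ⟨h, hhX⟩‖ := le_abs_self _
    _ ≤ ‖μ‖ * ‖(⟨h, hhX⟩ : X)‖ := μ.le_opNorm _
    _ ≤ 1 * M := by
        rw [hμnorm]; exact mul_le_mul_of_nonneg_left hnh zero_le_one
    _ = M := one_mul M
  have hsplit : μ ⟨h, hhX⟩ = M * μ ⟨e, he⟩ - μ ⟨f, hf⟩ := by
    have : (⟨h, hhX⟩ : X) = M • (⟨e, he⟩ : X) - ⟨f, hf⟩ := by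
      ext; simp [hh]
    rw [this, map_sub, map_smul, smul_eq_mul]
  rw [hsplit, hμe, mul_one] at hμh
  linarith

/-- If `H` is a real Hilbert space and every `T_s` is monotone on `C`, then `T_μ` is
monotone on `C`. -/
theorem tmu_monotone
    {S H : Type*} [Semigroup S]
    [NormedAddCommGroup H] [InnerProductSpace ℝ H] [CompleteSpace H]
    -- C nonempty closed convex
    (C : Set H) (hCne : C.Nonempty) (hCcl : IsClosed C) (hCcv : Convex ℝ C)
    -- the representation
    (T : S → H → H)
    (hTC : ∀ s : S, ∀ x ∈ C, T s x ∈ C)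
    (hrep : ∀ s t : S, ∀ x ∈ C, T (s * t) x = T s (T t x))
    -- weak closure of each orbit is weakly compact
    (hwcpt : ∀ x ∈ C, IsCompact (closure (Set.range (fun t => T t x) : Set (WeakSpace ℝ H))))
    -- X a subspace of ℓ^∞(S) containing all functions t ↦ ⟨T_t x, y⟩
    (X : Submodule ℝ (lp (fun _ : S => ℝ) ∞))
    (hX : ∀ x ∈ C, ∀ y : H,
      ∃ g : lp (fun _ : S => ℝ) ∞, g ∈ X ∧ ∀ t : S, g t = ⟪T t x, y⟫)
    -- μ a mean on X : ‖μ‖ = μ(1) = 1 (X contains the constant function 1)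
    (μ : X →L[ℝ] ℝ)
    (hμnorm : ‖μ‖ = 1)
    (hμone : ∃ g : lp (fun _ : S => ℝ) ∞, ∃ hg : g ∈ X,
      (∀ t : S, g t = 1) ∧ μ ⟨g, hg⟩ = 1)
    -- the mapping T_μ determined by ⟨T_μ x, y⟩ = μ_t⟨T_t x, y⟩
    (Tμ : H → H)
    (hTμ : ∀ x ∈ C, ∀ (y : H) (g : lp (fun _ : S => ℝ) ∞) (hg : g ∈ X),
      (∀ t : S, g t = ⟪T t x, y⟫) → μ ⟨g, hg⟩ = ⟪Tμ x, y⟫)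
    -- every T_s is monotone on C
    (hmono : ∀ s : S, ∀ x ∈ C, ∀ y ∈ C, 0 ≤ ⟪T s x - T s y, x - y⟫) :
    ∀ x ∈ C, ∀ y ∈ C, 0 ≤ ⟪Tμ x - Tμ y, x - y⟫ := by
  intro x hx y hy
  obtain ⟨g₁, hg₁X, hg₁⟩ := hX x hx (x - y)
  obtain ⟨g₂, hg₂X, hg₂⟩ := hX y hy (x - y)
  have hfX : g₁ - g₂ ∈ X := X.sub_mem hg₁X hg₂X
  have hfpos : ∀ t, 0 ≤ (g₁ - g₂) t := by
    intro t
    have : (g₁ - g₂) t = ⟪T t x - T t y, x - y⟫ := by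
      simp [hg₁ t, hg₂ t, inner_sub_left]
    rw [this]
    exact hmono t x hx y hy
  have hpos := mean_pos X μ hμnorm hμone (g₁ - g₂) hfX hfpos
  have hval : μ ⟨g₁ - g₂, hfX⟩ = ⟪Tμ x - Tμ y, x - y⟫ := by
    have h1 := hTμ x hx (x - y) g₁ hg₁X hg₁
    have h2 := hTμ y hy (x - y) g₂ hg₂X hg₂
    have : (⟨g₁ - g₂, hfX⟩ : X) = (⟨g₁, hg₁X⟩ : X) - ⟨g₂, hg₂X⟩ := rfl
    rw [this, map_sub, h1, h2, ← inner_sub_left]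
  rwa [hval] at hpos
end

section
/- If every T_s (s ∈ S) is Q-G-nonexpansive, i.e. q_V(T_s x − T_s y) ≤ q_V(x − y) for all V ∈ ℬ whenever x, y ∈ C with (x, y) ∈ E(G), then T_μ is Q-G-nonexpansive: q_V(T_μ x − T_μ y) ≤ q_V(x − y) for all V ∈ ℬ and all x, y ∈ C with (x, y) ∈ E(G). -/
open Filter Topology
open scoped ENNReal

/-- Hahn–Banach: a continuous linear functional dominated by the gauge of a convex balanced
neighbourhood of `0`, attaining the gauge at a given point. -/
lemma exists_gauge_functional
    {E : Type*} [AddCommGroup E] [Module ℝ E] [TopologicalSpace E]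
    [IsTopologicalAddGroup E] [ContinuousSMul ℝ E]
    {V : Set E} (hV0 : V ∈ 𝓝 (0 : E)) (hcv : Convex ℝ V) (hbal : Balanced ℝ V) (z : E) :
    ∃ φ : E →L[ℝ] ℝ, φ z = gauge V z ∧ ∀ u, |φ u| ≤ gauge V u := by
  have habs : Absorbent ℝ V := absorbent_nhds_zero hV0
  have hsymm : ∀ x ∈ V, -x ∈ V := fun x hx => hbal.neg_mem_iff.2 hx
  rcases eq_or_ne z 0 with rfl | hz
  · exact ⟨0, by simp [gauge_zero], fun u => by
      simpa using gauge_nonneg (s := V) u⟩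
  · set f : E →ₗ.[ℝ] ℝ := LinearPMap.mkSpanSingleton z (gauge V z) hz with hf
    have hfle : ∀ w : f.domain, f w ≤ gauge V (w : E) := by
      rintro ⟨w, hw⟩
      obtain ⟨c, rfl⟩ := Submodule.mem_span_singleton.1 hw
      rw [LinearPMap.mkSpanSingleton'_apply]
      simp only [smul_eq_mul, Submodule.coe_mk]
      obtain h | h := le_or_gt c 0
      · calc c • gauge V z ≤ 0 := smul_nonpos_of_nonpos_of_nonneg h (gauge_nonneg _)
          _ ≤ gauge V (c • z) := gauge_nonneg _
      · rw [gauge_smul_of_nonneg h.le, smul_eq_mul, RingHom.id_apply]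
    obtain ⟨g, hg₁, hg₂⟩ := exists_extension_of_le_sublinear f (gauge V)
      (fun c hc => gauge_smul_of_nonneg hc.le) (gauge_add_le hcv habs) hfle
    have habs' : ∀ u, |g u| ≤ gauge V u := by
      intro u
      rw [abs_le]
      refine ⟨?_, hg₂ u⟩
      have := hg₂ (-u)
      rw [map_neg, gauge_neg hsymm] at this
      linarith
    have hgz : g z = gauge V z := by
      have h2 : f ⟨z, Submodule.mem_span_singleton_self z⟩ = gauge V z :=
        LinearPMap.mkSpanSingleton_apply ℝ ℝ hz (gauge V z)
      have := hg₁ ⟨z, Submodule.mem_span_singleton_self z⟩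
      rw [h2] at this
      exact this
    have hcont : Continuous g := by
      refine continuous_of_continuousAt_zero g.toAddMonoidHom ?_
      have hgauge : Filter.Tendsto (gauge V) (𝓝 0) (𝓝 0) := by
        simpa [gauge_zero] using (continuousAt_gauge_zero hV0).tendsto
      have : Filter.Tendsto g (𝓝 0) (𝓝 0) :=
        squeeze_zero_norm (fun u => by simpa [Real.norm_eq_abs] using habs' u) hgauge
      simpa [ContinuousAt, map_zero] using this
    exact ⟨⟨g, hcont⟩, hgz, habs'⟩

/-- If every `T_s` is `Q`-`G`-nonexpansive, i.e. `q_V(T_s x − T_s y) ≤ q_V(x − y)` for all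
`V ∈ ℬ` whenever `(x, y) ∈ E(G)`, then `T_μ` is `Q`-`G`-nonexpansive. -/
theorem tmu_QG_nonexpansive
    {S E : Type*} [Semigroup S]
    [AddCommGroup E] [Module ℝ E] [TopologicalSpace E]
    [IsTopologicalAddGroup E] [ContinuousSMul ℝ E]
    -- ℬ a base at 0 of convex balanced sets; Q = {gauge V : V ∈ ℬ}
    (ℬ : Set (Set E)) (hbasis : (nhds (0 : E)).HasBasis (· ∈ ℬ) id)
    (hBcv : ∀ V ∈ ℬ, Convex ℝ V) (hBbal : ∀ V ∈ ℬ, Balanced ℝ V)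
    -- C nonempty closed convex
    (C : Set E) (hCne : C.Nonempty) (hCcl : IsClosed C) (hCcv : Convex ℝ C)
    -- the representation
    (T : S → E → E)
    (hTC : ∀ s : S, ∀ x ∈ C, T s x ∈ C)
    (hrep : ∀ s t : S, ∀ x ∈ C, T (s * t) x = T s (T t x))
    -- X a subspace of ℓ^∞(S) containing all functions t ↦ ⟨T_t x, x*⟩
    (X : Submodule ℝ (lp (fun _ : S => ℝ) ∞))
    (hX : ∀ x ∈ C, ∀ φ : E →L[ℝ] ℝ,
      ∃ g : lp (fun _ : S => ℝ) ∞, g ∈ X ∧ ∀ t : S, g t = φ (T t x))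
    -- μ a mean on X : ‖μ‖ = μ(1) = 1 (X contains the constant function 1)
    (μ : X →L[ℝ] ℝ)
    (hμnorm : ‖μ‖ = 1)
    (hμone : ∃ g : lp (fun _ : S => ℝ) ∞, ∃ hg : g ∈ X,
      (∀ t : S, g t = 1) ∧ μ ⟨g, hg⟩ = 1)
    -- the mapping T_μ satisfying ⟨T_μ x, x*⟩ = μ_t⟨T_t x, x*⟩
    (Tμ : E → E)
    (hTμ : ∀ x ∈ C, ∀ (φ : E →L[ℝ] ℝ) (g : lp (fun _ : S => ℝ) ∞) (hg : g ∈ X),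
      (∀ t : S, g t = φ (T t x)) → μ ⟨g, hg⟩ = φ (Tμ x))
    -- the directed graph G with V(G) = C
    (Edg : Set (E × E)) (hEdg : Edg ⊆ C ×ˢ C)
    -- every T_s is Q-G-nonexpansive
    (hne : ∀ s : S, ∀ x y : E, (x, y) ∈ Edg → ∀ V ∈ ℬ,
      gauge V (T s x - T s y) ≤ gauge V (x - y)) :
    ∀ x y : E, (x, y) ∈ Edg → ∀ V ∈ ℬ,
      gauge V (Tμ x - Tμ y) ≤ gauge V (x - y) := by
  intro x y hxy V hV
  obtain ⟨hxC, hyC⟩ := hEdg hxy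
  have hV0 : V ∈ 𝓝 (0 : E) := hbasis.mem_of_mem hV
  obtain ⟨φ, hφz, hφle⟩ :=
    exists_gauge_functional hV0 (hBcv V hV) (hBbal V hV) (Tμ x - Tμ y)
  obtain ⟨gx, hgxX, hgx⟩ := hX x hxC φ
  obtain ⟨gy, hgyX, hgy⟩ := hX y hyC φ
  have hμx : μ ⟨gx, hgxX⟩ = φ (Tμ x) := hTμ x hxC φ gx hgxX hgx
  have hμy : μ ⟨gy, hgyX⟩ = φ (Tμ y) := hTμ y hyC φ gy hgyX hgy
  set w : X := ⟨gx, hgxX⟩ - ⟨gy, hgyX⟩ with hw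
  have hμw : μ w = gauge V (Tμ x - Tμ y) := by
    rw [hw, map_sub, hμx, hμy, ← map_sub, hφz]
  -- bound the sup norm of `gx - gy`
  have hnorm : ‖w‖ ≤ gauge V (x - y) := by
    have hcoe : ((w : lp (fun _ : S => ℝ) ∞)) = gx - gy := rfl
    rw [Submodule.coe_norm, hcoe]
    refine lp.norm_le_of_forall_le (gauge_nonneg _) fun t => ?_
    have hsub : (gx - gy : lp (fun _ : S => ℝ) ∞) t = gx t - gy t := by
      rw [lp.coeFn_sub]; rfl
    rw [hsub, hgx t, hgy t, ← map_sub, Real.norm_eq_abs]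
    exact (hφle _).trans (hne t x y hxy V hV)
  calc gauge V (Tμ x - Tμ y) = μ w := hμw.symm
    _ ≤ |μ w| := le_abs_self _
    _ ≤ ‖μ‖ * ‖w‖ := μ.le_opNorm w
    _ = ‖w‖ := by rw [hμnorm, one_mul]
    _ ≤ gauge V (x - y) := hnorm
end

section
/- Suppose moreover that E = D* is the continuous dual of a real locally convex space D (with the duality pairing realizing E* on D through weak-* continuous functionals), that C is a weak-*-closed convex subset of E, that U is a convex neighbourhood of 0 in D with |⟨z, T_t x⟩| ≤ 1 for all z ∈ U, t ∈ S, x ∈ C, and that for every x ∈ C and z ∈ D the function t ↦ ⟨z, T_t x⟩ belongs to X. If T_μ : C → E satisfies ⟨z, T_μ x⟩ = μ_t⟨z, T_t x⟩ for all z ∈ D and x ∈ C, then T_μ x belongs to the weak-* closure of the convex hull of {T_t x : t ∈ S} for every x ∈ C. -/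
open Filter Topology
open scoped ENNReal

set_option maxHeartbeats 1000000 in
lemma weakDual_dual_eval {D : Type*} [AddCommGroup D] [Module ℝ D] [TopologicalSpace D]
    [IsTopologicalAddGroup D] [ContinuousSMul ℝ D]
    (f : WeakDual ℝ D →L[ℝ] ℝ) : ∃ z : D, ∀ x : WeakDual ℝ D, f x = x z := by
  classical
  let F : WeakBilin (topDualPairing ℝ D) →L[ℝ] ℝ := f
  have hb : (𝓝 (0 : WeakBilin (topDualPairing ℝ D))).HasBasis
      ((topDualPairing ℝ D).toSeminormFamily).basisSets _root_.id :=
    LinearMap.hasBasis_weakBilin _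
  have hc : F ⁻¹' Metric.ball (0:ℝ) 1 ∈ 𝓝 (0 : WeakBilin (topDualPairing ℝ D)) := by
    have := F.continuous.continuousAt (x := (0 : WeakBilin (topDualPairing ℝ D)))
    have h0 : F 0 = 0 := map_zero F
    exact this.preimage_mem_nhds (by rw [h0]; exact Metric.ball_mem_nhds _ one_pos)
  obtain ⟨V, hV, hVsub⟩ := hb.mem_iff.1 hc
  obtain ⟨s, r, hr, rfl⟩ := (SeminormFamily.basisSets_iff _).1 hV
  have hker0 : ∀ x : WeakBilin (topDualPairing ℝ D),
      (∀ z ∈ s, topDualPairing ℝ D x z = 0) → F x = 0 := by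
    intro x hz
    have hsmall : ∀ c : ℝ, |c| * |F x| < 1 := by
      intro c
      have hmem : c • x ∈ Seminorm.ball (s.sup (topDualPairing ℝ D).toSeminormFamily) 0 r := by
        refine (Seminorm.mem_ball_zero (E := D →L[ℝ] ℝ) _).2 ?_
        refine Seminorm.finset_sup_apply_lt hr ?_
        intro i hi
        have h1 : ((topDualPairing ℝ D).toSeminormFamily i) (c • x) = 0 := by
          change ‖c * topDualPairing ℝ D x i‖ = 0
          rw [hz i hi, mul_zero, norm_zero]
        exact lt_of_le_of_lt h1.le hr
      have := hVsub hmem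
      simp only [id, Set.mem_preimage, Metric.mem_ball, dist_zero_right, Real.norm_eq_abs] at this
      calc |c| * |F x| = |F (c • x)| := by rw [map_smul]; simp [abs_mul]
        _ < 1 := this
    by_contra hne
    have h2 := hsmall (2 / |F x|)
    have habs : |F x| > 0 := abs_pos.2 hne
    rw [abs_div, abs_two, abs_abs, div_mul_cancel₀ _ (ne_of_gt habs)] at h2
    linarith
  -- now plain linear algebra on `D →L[ℝ] ℝ`
  let ev : D → ((D →L[ℝ] ℝ) →ₗ[ℝ] ℝ) := fun z =>
    { toFun := fun x => x z
      map_add' := fun x y => rfl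
      map_smul' := fun c x => rfl }
  let K : (D →L[ℝ] ℝ) →ₗ[ℝ] ℝ :=
    { toFun := fun x => F x
      map_add' := fun x y => map_add F x y
      map_smul' := fun c x => map_smul F c x }
  have hker : ⨅ i : s, LinearMap.ker (ev (i : D)) ≤ LinearMap.ker K := by
    intro x hx
    have hz : ∀ z ∈ s, x z = 0 := by
      intro z hzs
      simpa [ev] using (Submodule.mem_iInf _).1 hx ⟨z, hzs⟩
    show K x = 0
    exact hker0 x hz
  have hspan : K ∈ Submodule.span ℝ (Set.range fun i : s => ev (i : D)) :=
    mem_span_of_iInf_ker_le_ker hker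
  obtain ⟨c, hcf⟩ := Finsupp.mem_span_range_iff_exists_finsupp.1 hspan
  refine ⟨c.sum fun i a => a • (i : D), fun x => ?_⟩
  have hx := congrArg (fun L : (D →L[ℝ] ℝ) →ₗ[ℝ] ℝ => L x) hcf
  have h2 : x (c.sum fun i a => a • (i : D)) = c.sum fun i a => a * x (i : D) := by
    rw [map_finsuppSum]
    simp [smul_eq_mul]
  have h3 : K x = c.sum fun i a => a * x (i : D) := by
    rw [← hx]
    simp only [Finsupp.sum, LinearMap.sum_apply, LinearMap.smul_apply, smul_eq_mul]
    change (∑ i ∈ c.support, c i • ev i) (show D →L[ℝ] ℝ from x) = _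
    rw [LinearMap.sum_apply]
    rfl
  exact (show f x = K x from rfl).trans (h3.trans h2.symm)

set_option maxHeartbeats 2000000 in
set_option synthInstance.maxHeartbeats 1000000 in
/-- If `E = D*` is the dual of a real locally convex space `D` with the weak-* topology,
`C` is a weak-*-closed convex subset of `E`, `|⟨z, T_t x⟩| ≤ 1` for `z ∈ U`, `t ∈ S`,
`x ∈ C`, and `⟨z, T_μ x⟩ = μ_t⟨z, T_t x⟩` for all `z ∈ D`, then `T_μ x` lies in the weak-*
closure of the convex hull of `{T_t x : t ∈ S}` for every `x ∈ C`. -/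
theorem tmu_mem_weakstar_closure_convexHull
    {S D : Type*} [Semigroup S]
    [AddCommGroup D] [Module ℝ D] [TopologicalSpace D]
    [IsTopologicalAddGroup D] [ContinuousSMul ℝ D] [LocallyConvexSpace ℝ D]
    -- C a nonempty weak-*-closed convex subset of E = D*
    (C : Set (WeakDual ℝ D)) (hCne : C.Nonempty) (hCcl : IsClosed C) (hCcv : Convex ℝ C)
    -- the representation
    (T : S → WeakDual ℝ D → WeakDual ℝ D)
    (hTC : ∀ s : S, ∀ x ∈ C, T s x ∈ C)
    (hrep : ∀ s t : S, ∀ x ∈ C, T (s * t) x = T s (T t x))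
    -- U a convex neighbourhood of 0 in D with |⟨z, T_t x⟩| ≤ 1 on U
    (U : Set D) (hU0 : U ∈ nhds (0 : D)) (hUcv : Convex ℝ U)
    (hbd : ∀ z ∈ U, ∀ t : S, ∀ x ∈ C, |T t x z| ≤ 1)
    -- X a subspace of ℓ^∞(S) containing all functions t ↦ ⟨z, T_t x⟩
    (X : Submodule ℝ (lp (fun _ : S => ℝ) ∞))
    (hX : ∀ x ∈ C, ∀ z : D,
      ∃ g : lp (fun _ : S => ℝ) ∞, g ∈ X ∧ ∀ t : S, g t = T t x z)
    -- μ a mean on X : ‖μ‖ = μ(1) = 1 (X contains the constant function 1)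
    (μ : X →L[ℝ] ℝ)
    (hμnorm : ‖μ‖ = 1)
    (hμone : ∃ g : lp (fun _ : S => ℝ) ∞, ∃ hg : g ∈ X,
      (∀ t : S, g t = 1) ∧ μ ⟨g, hg⟩ = 1)
    -- the mapping T_μ satisfying ⟨z, T_μ x⟩ = μ_t⟨z, T_t x⟩
    (Tμ : WeakDual ℝ D → WeakDual ℝ D)
    (hTμ : ∀ x ∈ C, ∀ (z : D) (g : lp (fun _ : S => ℝ) ∞) (hg : g ∈ X),
      (∀ t : S, g t = T t x z) → μ ⟨g, hg⟩ = Tμ x z) :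
    ∀ x ∈ C, Tμ x ∈ closure (convexHull ℝ (Set.range fun t => T t x)) := by
  classical
  obtain ⟨h1, hh1, hh1t, hμ1⟩ := hμone
  -- S is nonempty
  have hS : Nonempty S := by
    by_contra hne
    rw [not_nonempty_iff] at hne
    have hg0 : h1 = 0 := by
      ext t
      exact (hne.false t).elim
    subst hg0
    have h0 : (⟨(0 : lp (fun _ : S => ℝ) ∞), hh1⟩ : X) = 0 := rfl
    rw [h0, μ.map_zero] at hμ1
    exact one_ne_zero hμ1.symm
  obtain ⟨t0⟩ := hS
  haveI : LocallyConvexSpace ℝ (WeakDual ℝ D) :=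
    WeakBilin.locallyConvexSpace (B := topDualPairing ℝ D)
  intro x hx
  by_contra hmem
  obtain ⟨f, u, hfu, hux⟩ := geometric_hahn_banach_closed_point
    (convex_convexHull ℝ _).closure isClosed_closure hmem
  obtain ⟨z, hz⟩ := weakDual_dual_eval f
  have hlt : ∀ t : S, (T t x) z < u := by
    intro t
    rw [← hz]
    exact hfu _ (subset_closure (subset_convexHull ℝ _ ⟨t, rfl⟩))
  obtain ⟨g, hg, hgt⟩ := hX x hx z
  have hμg : μ ⟨g, hg⟩ = Tμ x z := hTμ x hx z g hg hgt
  -- bounds on g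
  have hl : ∀ t : S, -‖g‖ ≤ g t := by
    intro t
    have := lp.norm_apply_le_norm (E := fun _ : S => ℝ) ENNReal.top_ne_zero g t
    rw [Real.norm_eq_abs] at this
    linarith [abs_le.1 this |>.1]
  have hub : ∀ t : S, g t ≤ u := by
    intro t
    rw [hgt t]
    exact (hlt t).le
  set l : ℝ := -‖g‖ with hldef
  have hlu : l ≤ u := le_trans (hl t0) (hub t0)
  set a : ℝ := (u + l) / 2 with hadef
  set r : ℝ := (u - l) / 2 with hrdef
  have hr0 : 0 ≤ r := by rw [hrdef]; linarith
  set k : lp (fun _ : S => ℝ) ∞ := g - a • h1 with hkdef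
  have hk : k ∈ X := X.sub_mem hg (X.smul_mem a hh1)
  have hkt : ∀ t : S, ‖k t‖ ≤ r := by
    intro t
    have hka : k t = g t - a := by
      rw [hkdef]
      have hsub : (g - a • h1) t = g t - (a • h1) t := rfl
      have hsm : (a • h1) t = a * h1 t := rfl
      rw [hsub, hsm, hh1t t, mul_one]
    rw [hka, Real.norm_eq_abs, abs_le]
    constructor
    · have := hl t; rw [hadef, hrdef]; rw [hldef] at this ⊢; linarith
    · have := hub t; rw [hadef, hrdef]; linarith
  have hknorm : ‖k‖ ≤ r := lp.norm_le_of_forall_le hr0 hkt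
  have hμk : μ ⟨k, hk⟩ = Tμ x z - a := by
    have hsplit : (⟨k, hk⟩ : X) = ⟨g, hg⟩ - a • ⟨h1, hh1⟩ := rfl
    rw [hsplit, μ.map_sub, μ.map_smul, hμg, hμ1, smul_eq_mul, mul_one]
  have hbound : |μ ⟨k, hk⟩| ≤ r := by
    have h1' : |μ ⟨k, hk⟩| ≤ ‖μ‖ * ‖(⟨k, hk⟩ : X)‖ := by
      rw [← Real.norm_eq_abs]
      exact μ.le_opNorm _
    have h2' : ‖(⟨k, hk⟩ : X)‖ = ‖k‖ := rfl
    rw [hμnorm, one_mul, h2'] at h1'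
    exact le_trans h1' hknorm
  have hfinal : Tμ x z ≤ u := by
    rw [hμk] at hbound
    have h5 := (abs_le.1 hbound).2
    rw [hadef, hrdef] at h5
    linarith
  rw [← hz] at hfinal
  linarith
end

section
/- Let a ∈ E be a Q-G-attractive point of 𝒮, i.e. q_V(a − T_t x) ≤ q_V(a − x) for every V ∈ ℬ, every t ∈ S and every x ∈ C with (x, a) ∈ E(G); assume also that for every x ∈ C and x* ∈ E* the function t ↦ ⟨a − T_t x, x*⟩ belongs to X. Then a is a Q-G-attractive point of T_μ: q_V(a − T_μ x) ≤ q_V(a − x) for every V ∈ ℬ and every x ∈ C with (x, a) ∈ E(G). -/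
open Filter Topology
open scoped ENNReal

set_option maxHeartbeats 1000000

/-- If `a ∈ E` is a `Q`-`G`-attractive point of `𝒮`, i.e. `q_V(a − T_t x) ≤ q_V(a − x)` for
every `V ∈ ℬ`, `t ∈ S` and `x ∈ C` with `(x, a) ∈ E(G)`, and the functions
`t ↦ ⟨a − T_t x, x*⟩` belong to `X`, then `a` is a `Q`-`G`-attractive point of `T_μ`. -/
theorem tmu_QG_attractive_point
    {S E : Type*} [Semigroup S]
    [AddCommGroup E] [Module ℝ E] [TopologicalSpace E]
    [IsTopologicalAddGroup E] [ContinuousSMul ℝ E]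
    -- ℬ a base at 0 of convex balanced sets; Q = {gauge V : V ∈ ℬ}
    (ℬ : Set (Set E)) (hbasis : (nhds (0 : E)).HasBasis (· ∈ ℬ) id)
    (hBcv : ∀ V ∈ ℬ, Convex ℝ V) (hBbal : ∀ V ∈ ℬ, Balanced ℝ V)
    -- C nonempty closed convex
    (C : Set E) (hCne : C.Nonempty) (hCcl : IsClosed C) (hCcv : Convex ℝ C)
    -- the representation
    (T : S → E → E)
    (hTC : ∀ s : S, ∀ x ∈ C, T s x ∈ C)
    (hrep : ∀ s t : S, ∀ x ∈ C, T (s * t) x = T s (T t x))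
    -- X a subspace of ℓ^∞(S) containing all functions t ↦ ⟨T_t x, x*⟩
    (X : Submodule ℝ (lp (fun _ : S => ℝ) ∞))
    (hX : ∀ x ∈ C, ∀ φ : E →L[ℝ] ℝ,
      ∃ g : lp (fun _ : S => ℝ) ∞, g ∈ X ∧ ∀ t : S, g t = φ (T t x))
    -- μ a mean on X : ‖μ‖ = μ(1) = 1 (X contains the constant function 1)
    (μ : X →L[ℝ] ℝ)
    (hμnorm : ‖μ‖ = 1)
    (hμone : ∃ g : lp (fun _ : S => ℝ) ∞, ∃ hg : g ∈ X,
      (∀ t : S, g t = 1) ∧ μ ⟨g, hg⟩ = 1)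
    -- the mapping T_μ satisfying ⟨T_μ x, x*⟩ = μ_t⟨T_t x, x*⟩
    (Tμ : E → E)
    (hTμ : ∀ x ∈ C, ∀ (φ : E →L[ℝ] ℝ) (g : lp (fun _ : S => ℝ) ∞) (hg : g ∈ X),
      (∀ t : S, g t = φ (T t x)) → μ ⟨g, hg⟩ = φ (Tμ x))
    -- the directed graph G with V(G) = C
    (Edg : Set (E × E)) (hEdg : Edg ⊆ C ×ˢ C)
    -- a is a Q-G-attractive point of 𝒮
    (a : E)
    (hattr : ∀ t : S, ∀ x ∈ C, (x, a) ∈ Edg → ∀ V ∈ ℬ,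
      gauge V (a - T t x) ≤ gauge V (a - x))
    -- t ↦ ⟨a − T_t x, x*⟩ belongs to X
    (haX : ∀ x ∈ C, ∀ φ : E →L[ℝ] ℝ,
      ∃ g : lp (fun _ : S => ℝ) ∞, g ∈ X ∧ ∀ t : S, g t = φ (a - T t x)) :
    ∀ x ∈ C, (x, a) ∈ Edg → ∀ V ∈ ℬ, gauge V (a - Tμ x) ≤ gauge V (a - x) := by
  intro x hx hxa V hV
  have hV0 : V ∈ 𝓝 (0 : E) := hbasis.mem_of_mem hV
  have hconv := hBcv V hV
  have habs : Absorbent ℝ V := absorbent_nhds_zero hV0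
  have hadd : ∀ y z : E, gauge V (y + z) ≤ gauge V y + gauge V z :=
    fun y z => gauge_add_le hconv habs y z
  have hsmul : ∀ c : ℝ, 0 < c → ∀ y : E, gauge V (c • y) = c * gauge V y := by
    intro c hc y
    rw [gauge_smul_of_nonneg hc.le]; rfl
  have hpneg : ∀ y : E, gauge V (-y) = gauge V y := by
    intro y
    refine gauge_neg (fun z hz => ?_) y
    have := (hBbal V hV) (-1 : ℝ) (by norm_num)
    have : (-1 : ℝ) • z ∈ V := this (Set.smul_mem_smul_set hz)
    simpa using this
  by_cases h0 : a - Tμ x = 0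
  · rw [h0, gauge_zero]; exact gauge_nonneg _
  -- Hahn–Banach: extend the functional on span {a - Tμ x}
  set f := LinearPMap.mkSpanSingleton (K := ℝ) (L := ℝ) (σ := RingHom.id ℝ) (a - Tμ x) (gauge V (a - Tμ x)) h0 with hf
  have hfle : ∀ z : f.domain, f z ≤ gauge V z := by
    rintro ⟨z, hz⟩
    obtain ⟨c, rfl⟩ := Submodule.mem_span_singleton.1 hz
    rw [LinearPMap.mkSpanSingleton'_apply, RingHom.id_apply]
    rcases le_or_gt 0 c with hc | hc
    · rw [gauge_smul_of_nonneg hc]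
    · have h1 : c • gauge V (a - Tμ x) ≤ 0 := by
        rw [smul_eq_mul]
        exact mul_nonpos_iff.2 (Or.inr ⟨hc.le, gauge_nonneg _⟩)
      exact h1.trans (gauge_nonneg _)
  obtain ⟨φ, hφeq, hφle⟩ := exists_extension_of_le_sublinear f (gauge V) hsmul hadd hfle
  have hφval : φ (a - Tμ x) = gauge V (a - Tμ x) :=
    (hφeq ⟨a - Tμ x, Submodule.mem_span_singleton_self _⟩).trans
      (LinearPMap.mkSpanSingleton_apply ℝ ℝ h0 (gauge V (a - Tμ x)))
  have hφabs : ∀ z : E, |φ z| ≤ gauge V z := by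
    intro z
    refine abs_le.2 ⟨?_, hφle z⟩
    have : φ (-z) ≤ gauge V (-z) := hφle (-z)
    rw [map_neg, hpneg] at this
    linarith
  -- continuity of φ
  have hφcont : Continuous φ := by
    apply continuous_of_continuousAt_zero φ
    rw [ContinuousAt, map_zero]
    have hg0 : Tendsto (gauge V) (𝓝 (0 : E)) (𝓝 0) := by
      simpa [gauge_zero] using (continuous_gauge hconv hV0).tendsto 0
    exact squeeze_zero_norm (fun z => by simpa [Real.norm_eq_abs] using hφabs z) hg0
  set Φ : E →L[ℝ] ℝ := ⟨φ, hφcont⟩ with hΦ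
  obtain ⟨g', hg'X, hg't⟩ := hX x hx Φ
  obtain ⟨g, hgX, hgt⟩ := haX x hx Φ
  obtain ⟨cst, hcstX, hcst1, hμcst⟩ := hμone
  have hμg' : μ ⟨g', hg'X⟩ = Φ (Tμ x) := hTμ x hx Φ g' hg'X hg't
  -- the function g equals Φ a • cst - g'
  have hkey : (⟨g, hgX⟩ : X) = Φ a • (⟨cst, hcstX⟩ : X) - ⟨g', hg'X⟩ := by
    apply Subtype.ext
    apply lp.ext
    funext t
    have h1 : ((Φ a • (⟨cst, hcstX⟩ : X) - (⟨g', hg'X⟩ : X) : X) : lp (fun _ : S => ℝ) ∞)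
        = Φ a • cst - g' := rfl
    rw [h1]
    have h2 : (Φ a • cst - g' : lp (fun _ : S => ℝ) ∞) t = Φ a • cst t - g' t := by
      rw [lp.coeFn_sub, lp.coeFn_smul]; rfl
    rw [h2, hgt t, hg't t, hcst1 t, map_sub]
    simp
  have hμg : μ ⟨g, hgX⟩ = Φ (a - Tμ x) := by
    rw [hkey, map_sub, map_smul, hμcst, hμg', map_sub, smul_eq_mul, mul_one]
  -- norm bound on g
  have hgbd : ‖g‖ ≤ gauge V (a - x) := by
    refine lp.norm_le_of_forall_le (gauge_nonneg _) (fun t => ?_)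
    rw [hgt t]
    calc ‖Φ (a - T t x)‖ ≤ gauge V (a - T t x) := by
          rw [Real.norm_eq_abs]; exact hφabs (a - T t x)
      _ ≤ gauge V (a - x) := hattr t x hx hxa V hV
  calc gauge V (a - Tμ x) = φ (a - Tμ x) := hφval.symm
    _ = μ ⟨g, hgX⟩ := by rw [hμg]; rfl
    _ ≤ ‖μ ⟨g, hgX⟩‖ := le_abs_self _
    _ ≤ ‖μ‖ * ‖(⟨g, hgX⟩ : X)‖ := μ.le_opNorm _
    _ = ‖g‖ := by rw [hμnorm, one_mul]; rfl
    _ ≤ gauge V (a - x) := hgbd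
end
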